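/- For any geometric scoring rule with parameter p>1 and any k ≥ 3, there exists a profile in which the majority loser is ranked first: for sufficiently large n, the inequality n·((k−2)p^k − k p^{k−1} + k p − k + 2) > (p^{k−1}−1)(p−1) holds, which implies the majority loser's total score n(k−1)(p^{k−1}+1)+1 exceeds the best other candidate's total n(p+1)(p^{k−2}+...+p+1)+p^{k−1}. -/

import Mathlib

open Finset

/-- Total score of candidate `a`: in race `i`, `P i` sends each candidate to their
(0-indexed) finishing position, which is worth `s` points. -/
def TotalScore {n k : ℕ} (s : Fin k → ℝ) (P : Fin n → Equiv.Perm (Fin k)) (a : Fin k) : ℝ :=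
  ∑ i, s (P i a)

/-- Summing a function of `(j + i) % d` over a full period equals summing over residues. -/
private lemma sum_shift (d j : ℕ) (hd : 0 < d) (f : ℕ → ℝ) :
    ∑ i ∈ Finset.range d, f ((j + i) % d) = ∑ i ∈ Finset.range d, f i := by
  have hinj : ∀ x ∈ Finset.range d, ∀ y ∈ Finset.range d,
      (j + x) % d = (j + y) % d → x = y := by
    intro a ha b hb hab
    rw [Finset.mem_range] at ha hb
    have h2 : a % d = b % d := Nat.ModEq.add_left_cancel' j hab
    rwa [Nat.mod_eq_of_lt ha, Nat.mod_eq_of_lt hb] at h2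
  have himg : (Finset.range d).image (fun i => (j + i) % d) = Finset.range d := by
    apply Finset.eq_of_subset_of_card_le
    · intro x hx
      simp only [Finset.mem_image] at hx
      obtain ⟨i, -, rfl⟩ := hx
      exact Finset.mem_range.2 (Nat.mod_lt _ hd)
    · rw [Finset.card_image_of_injOn fun a ha b hb hab => hinj a ha b hb hab]
  calc ∑ i ∈ Finset.range d, f ((j + i) % d)
      = ∑ x ∈ (Finset.range d).image (fun i => (j + i) % d), f x :=
        (Finset.sum_image hinj).symm
    _ = ∑ i ∈ Finset.range d, f i := by rw [himg]

private lemma sum_cycles (d n j : ℕ) (hd : 0 < d) (f : ℕ → ℝ) :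
    ∑ i ∈ Finset.range (n * d), f ((j + i) % d) = n * ∑ i ∈ Finset.range d, f i := by
  induction n with
  | zero => simp
  | succ m ih =>
    have h1 : (m + 1) * d = m * d + d := by ring
    rw [h1, ← Finset.sum_range_add_sum_Ico _ (Nat.le_add_right (m * d) d), ih,
      Finset.sum_Ico_eq_sum_range]
    have h2 : ∀ i ∈ Finset.range (m * d + d - m * d), f ((j + (m * d + i)) % d) = f ((j + i) % d) := by
      intro i _
      congr 1
      have : j + (m * d + i) = (j + i) + m * d := by ring
      rw [this, Nat.add_mul_mod_self_right]
    rw [Finset.sum_congr rfl h2]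
    have h3 : m * d + d - m * d = d := by omega
    rw [h3, sum_shift d j hd f]
    push_cast
    ring

private lemma pow_pair_le (p : ℝ) (hp : 1 < p) (a b : ℕ) : p ^ a + p ^ b ≤ 1 + p ^ (a + b) := by
  have ha : (1:ℝ) ≤ p ^ a := one_le_pow₀ hp.le
  have hb : (1:ℝ) ≤ p ^ b := one_le_pow₀ hp.le
  have h := mul_nonneg (sub_nonneg.2 ha) (sub_nonneg.2 hb)
  rw [pow_add]
  nlinarith

private lemma pow_pair_lt (p : ℝ) (hp : 1 < p) (a b : ℕ) (ha : a ≠ 0) (hb : b ≠ 0) :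
    p ^ a + p ^ b < 1 + p ^ (a + b) := by
  have ha' : (1:ℝ) < p ^ a := one_lt_pow₀ hp ha
  have hb' : (1:ℝ) < p ^ b := one_lt_pow₀ hp hb
  have h := mul_pos (sub_pos.2 ha') (sub_pos.2 hb')
  rw [pow_add]
  nlinarith

private lemma keyD (p : ℝ) (hp : 1 < p) (K : ℕ) (hK : 2 ≤ K) :
    (p + 1) * ∑ i ∈ Finset.range K, p ^ i < (K : ℝ) * (p ^ K + 1) := by
  have h1 : (p + 1) * ∑ i ∈ Finset.range K, p ^ i
      = ∑ i ∈ Finset.range K, (p ^ (i + 1) + p ^ (K - 1 - i)) := by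
    rw [Finset.sum_add_distrib, add_mul, one_mul, Finset.mul_sum,
      Finset.sum_range_reflect (fun i => p ^ i) K]
    congr 1
    apply Finset.sum_congr rfl
    intro i _
    rw [pow_succ, mul_comm]
  have h2 : (K : ℝ) * (p ^ K + 1) = ∑ _i ∈ Finset.range K, (p ^ K + 1) := by
    rw [Finset.sum_const, Finset.card_range, nsmul_eq_mul]
  rw [h1, h2]
  apply Finset.sum_lt_sum
  · intro i hi
    rw [Finset.mem_range] at hi
    have he : (i + 1) + (K - 1 - i) = K := by omega
    calc p ^ (i + 1) + p ^ (K - 1 - i) ≤ 1 + p ^ ((i + 1) + (K - 1 - i)) := pow_pair_le p hp _ _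
      _ = p ^ K + 1 := by rw [he]; ring
  · refine ⟨0, Finset.mem_range.2 (by omega), ?_⟩
    have he : (0 + 1) + (K - 1 - 0) = K := by omega
    calc p ^ (0 + 1) + p ^ (K - 1 - 0) < 1 + p ^ ((0 + 1) + (K - 1 - 0)) :=
        pow_pair_lt p hp _ _ (by omega) (by omega)
      _ = p ^ K + 1 := by rw [he]; ring

/-- race where candidate `K` is first, others shifted cyclically by `m` among positions `1..K`. -/
private def g1 (K m : ℕ) (j : Fin (K + 1)) : Fin (K + 1) :=
  if h : (j : ℕ) = K then ⟨0, Nat.succ_pos K⟩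
  else ⟨1 + (((j : ℕ) + m) % K), by
    have h1 : (j : ℕ) < K + 1 := j.isLt
    have h2 : 0 < K := by omega
    have := Nat.mod_lt ((j : ℕ) + m) h2
    omega⟩

/-- race where candidate `K` is last, others shifted cyclically by `m` among positions `0..K-1`. -/
private def g2 (K m : ℕ) (j : Fin (K + 1)) : Fin (K + 1) :=
  if h : (j : ℕ) = K then ⟨K, Nat.lt_succ_self K⟩
  else ⟨(((j : ℕ) + m) % K), by
    have h1 : (j : ℕ) < K + 1 := j.isLt
    have h2 : 0 < K := by omega
    have := Nat.mod_lt ((j : ℕ) + m) h2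
    omega⟩

private lemma g1_inj (K m : ℕ) : Function.Injective (g1 K m) := by
  intro a b hab
  unfold g1 at hab
  have ha' : (a : ℕ) < K + 1 := a.isLt
  have hb' : (b : ℕ) < K + 1 := b.isLt
  by_cases h1 : (a : ℕ) = K <;> by_cases h2 : (b : ℕ) = K
  · exact Fin.ext (by omega)
  · rw [dif_pos h1, dif_neg h2] at hab
    have := congrArg Fin.val hab
    simp only at this
    omega
  · rw [dif_neg h1, dif_pos h2] at hab
    have := congrArg Fin.val hab
    simp only at this
    omega
  · rw [dif_neg h1, dif_neg h2] at hab
    have h3 : 1 + ((a : ℕ) + m) % K = 1 + ((b : ℕ) + m) % K := congrArg Fin.val hab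
    have h4 : ((a : ℕ) + m) % K = ((b : ℕ) + m) % K := by omega
    have h5 : (a : ℕ) % K = (b : ℕ) % K := Nat.ModEq.add_right_cancel' m h4
    rw [Nat.mod_eq_of_lt (by omega), Nat.mod_eq_of_lt (by omega)] at h5
    exact Fin.ext h5

private lemma g2_inj (K m : ℕ) : Function.Injective (g2 K m) := by
  intro a b hab
  unfold g2 at hab
  have ha' : (a : ℕ) < K + 1 := a.isLt
  have hb' : (b : ℕ) < K + 1 := b.isLt
  by_cases h1 : (a : ℕ) = K <;> by_cases h2 : (b : ℕ) = K
  · exact Fin.ext (by omega)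
  · rw [dif_pos h1, dif_neg h2] at hab
    have := congrArg Fin.val hab
    simp only at this
    have := Nat.mod_lt ((b : ℕ) + m) (show 0 < K by omega)
    omega
  · rw [dif_neg h1, dif_pos h2] at hab
    have := congrArg Fin.val hab
    simp only at this
    have := Nat.mod_lt ((a : ℕ) + m) (show 0 < K by omega)
    omega
  · rw [dif_neg h1, dif_neg h2] at hab
    have h4 : ((a : ℕ) + m) % K = ((b : ℕ) + m) % K := congrArg Fin.val hab
    have h5 : (a : ℕ) % K = (b : ℕ) % K := Nat.ModEq.add_right_cancel' m h4
    rw [Nat.mod_eq_of_lt (by omega), Nat.mod_eq_of_lt (by omega)] at h5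
    exact Fin.ext h5

private noncomputable def sig1 (K m : ℕ) : Equiv.Perm (Fin (K + 1)) :=
  Equiv.ofBijective _ (Finite.injective_iff_bijective.mp (g1_inj K m))

private noncomputable def sig2 (K m : ℕ) : Equiv.Perm (Fin (K + 1)) :=
  Equiv.ofBijective _ (Finite.injective_iff_bijective.mp (g2_inj K m))

@[simp] private lemma sig1_apply (K m : ℕ) (j : Fin (K + 1)) : sig1 K m j = g1 K m j := rfl
@[simp] private lemma sig2_apply (K m : ℕ) (j : Fin (K + 1)) : sig2 K m j = g2 K m j := rfl

/-- For any geometric rule with `p > 1` (position `j`, 0-indexed, worth `p^(k-1-j)`) and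
`k ≥ 3`: for all sufficiently large `n` the inequality
`n·((k-2)p^k - k·p^(k-1) + k·p - k + 2) > (p^(k-1)-1)(p-1)` holds, and there exists a
profile in which a majority loser is ranked strictly first. -/
theorem stmt9 (p : ℝ) (hp : 1 < p) (k : ℕ) (hk : 3 ≤ k) :
    (∃ N : ℕ, ∀ n : ℕ, N ≤ n →
      (n : ℝ) * (((k : ℝ) - 2) * p ^ k - (k : ℝ) * p ^ (k - 1) + (k : ℝ) * p - (k : ℝ) + 2) >
        (p ^ (k - 1) - 1) * (p - 1)) ∧
    ∃ n : ℕ, ∃ P : Fin n → Equiv.Perm (Fin k), ∃ c : Fin k,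
      2 * (Finset.univ.filter fun i => (P i c : ℕ) = k - 1).card > n ∧
      ∀ b, b ≠ c →
        TotalScore (fun j : Fin k => p ^ (k - 1 - (j : ℕ))) P b <
          TotalScore (fun j : Fin k => p ^ (k - 1 - (j : ℕ))) P c := by
  obtain ⟨K, rfl⟩ : ∃ K, k = K + 1 := ⟨k - 1, by omega⟩
  have hK : 2 ≤ K := by omega
  have hK0 : 0 < K := by omega
  have hp1 : (0 : ℝ) < p - 1 := by linarith
  set G : ℝ := ∑ i ∈ Finset.range K, p ^ i with hGdef
  have hGgeom : G * (p - 1) = p ^ K - 1 := geom_sum_mul p K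
  have hD : (p + 1) * G < (K : ℝ) * (p ^ K + 1) := keyD p hp K hK
  have hk1 : K + 1 - 1 = K := by omega
  have hCeq : (((K + 1 : ℕ) : ℝ) - 2) * p ^ (K + 1) - ((K + 1 : ℕ) : ℝ) * p ^ K
        + ((K + 1 : ℕ) : ℝ) * p - ((K + 1 : ℕ) : ℝ) + 2
      = (p - 1) * ((K : ℝ) * (p ^ K + 1) - (p + 1) * G) := by
    push_cast
    linear_combination (p + 1) * hGgeom
  have hDpos : 0 < (K : ℝ) * (p ^ K + 1) - (p + 1) * G := by linarith
  have hCpos : 0 < (p - 1) * ((K : ℝ) * (p ^ K + 1) - (p + 1) * G) := mul_pos hp1 hDpos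
  obtain ⟨N, hN⟩ := exists_nat_gt
    ((p ^ K - 1) * (p - 1) / ((p - 1) * ((K : ℝ) * (p ^ K + 1) - (p + 1) * G)))
  have hNkey : (p ^ K - 1) * (p - 1)
      < (N : ℝ) * ((p - 1) * ((K : ℝ) * (p ^ K + 1) - (p + 1) * G)) := by
    have h := (div_lt_iff₀ hCpos).mp hN
    linarith
  have hmain : p ^ K - 1 < (N : ℝ) * ((K : ℝ) * (p ^ K + 1) - (p + 1) * G) := by
    have h2 : (N : ℝ) * ((p - 1) * ((K : ℝ) * (p ^ K + 1) - (p + 1) * G))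
        = ((N : ℝ) * ((K : ℝ) * (p ^ K + 1) - (p + 1) * G)) * (p - 1) := by ring
    rw [h2] at hNkey
    exact lt_of_mul_lt_mul_right hNkey hp1.le
  constructor
  · refine ⟨N, fun n hn => ?_⟩
    rw [hk1, hCeq]
    have h1 : (N : ℝ) ≤ n := by exact_mod_cast hn
    have h2 : (N : ℝ) * ((p - 1) * ((K : ℝ) * (p ^ K + 1) - (p + 1) * G))
        ≤ (n : ℝ) * ((p - 1) * ((K : ℝ) * (p ^ K + 1) - (p + 1) * G)) :=
      mul_le_mul_of_nonneg_right h1 hCpos.le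
    linarith
  · set c : Fin (K + 1) := ⟨K, Nat.lt_succ_self K⟩ with hc
    set P : Fin (N * K + N * K + 1) → Equiv.Perm (Fin (K + 1)) :=
      Fin.append (Fin.append (fun m : Fin (N * K) => sig1 K m) (fun m : Fin (N * K) => sig2 K m))
        (fun _ : Fin 1 => Equiv.refl (Fin (K + 1))) with hP
    have e1 : ∀ m : ℕ, g1 K m c = ⟨0, Nat.succ_pos K⟩ := fun m => dif_pos rfl
    have e2 : ∀ m : ℕ, g2 K m c = ⟨K, Nat.lt_succ_self K⟩ := fun m => dif_pos rfl
    refine ⟨N * K + N * K + 1, P, c, ?_, ?_⟩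
    · have hcard : (Finset.univ.filter
          fun i : Fin (N * K + N * K + 1) => ((P i c : ℕ) = K + 1 - 1)).card = N * K + 1 := by
        rw [Finset.card_filter, Fin.sum_univ_add, Fin.sum_univ_add]
        simp only [hP, Fin.append_left, Fin.append_right, sig1_apply, sig2_apply,
          Equiv.refl_apply, e1, e2, hk1]
        simp [hK0.ne', hc]
        omega
      rw [hcard]
      omega
    · intro b hb
      have hbv : (b : ℕ) < K := by
        have h1 : (b : ℕ) < K + 1 := b.isLt
        have h2 : (b : ℕ) ≠ K := fun h => hb (Fin.ext h)
        omega
      set s : Fin (K + 1) → ℝ := fun j : Fin (K + 1) => p ^ (K + 1 - 1 - (j : ℕ)) with hs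
      have hsplit : ∀ a : Fin (K + 1), TotalScore s P a
          = (∑ m : Fin (N * K), s (g1 K (m : ℕ) a))
            + (∑ m : Fin (N * K), s (g2 K (m : ℕ) a)) + s a := by
        intro a
        show (∑ i, s (P i a)) = _
        rw [Fin.sum_univ_add, Fin.sum_univ_add]
        simp only [hP, Fin.append_left, Fin.append_right, sig1_apply, sig2_apply,
          Equiv.refl_apply]
        simp [add_assoc]
      have score_c : TotalScore s P c = (N : ℝ) * K * (p ^ K + 1) + 1 := by
        rw [hsplit]
        have t1 : ∀ m : Fin (N * K), s (g1 K (m : ℕ) c) = p ^ K := by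
          intro m; rw [e1]; simp [hs, hk1]
        have t2 : ∀ m : Fin (N * K), s (g2 K (m : ℕ) c) = 1 := by
          intro m; rw [e2]; simp [hs]
        have t3 : s c = 1 := by simp [hs, hc]
        rw [Finset.sum_congr rfl (fun m _ => t1 m), Finset.sum_congr rfl (fun m _ => t2 m), t3]
        simp [Finset.sum_const, Finset.card_univ]
        push_cast
        ring
      have score_b : TotalScore s P b
          = (N : ℝ) * G + (N : ℝ) * (p * G) + p ^ (K - (b : ℕ)) := by
        rw [hsplit]
        have t1 : ∀ m : Fin (N * K),
            s (g1 K (m : ℕ) b) = p ^ (K - 1 - (((b : ℕ) + (m : ℕ)) % K)) := by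
          intro m
          rw [show g1 K (m : ℕ) b = ⟨1 + (((b : ℕ) + (m : ℕ)) % K), _⟩ from dif_neg hbv.ne]
          simp only [hs]
          congr 1
          have := Nat.mod_lt ((b : ℕ) + (m : ℕ)) hK0
          omega
        have t2 : ∀ m : Fin (N * K),
            s (g2 K (m : ℕ) b) = p ^ (K - (((b : ℕ) + (m : ℕ)) % K)) := by
          intro m
          rw [show g2 K (m : ℕ) b = ⟨(((b : ℕ) + (m : ℕ)) % K), _⟩ from dif_neg hbv.ne]
          simp only [hs]
          rw [hk1]
        have t3 : s b = p ^ (K - (b : ℕ)) := by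
          simp only [hs]
          rw [hk1]
        rw [Finset.sum_congr rfl (fun m _ => t1 m), Finset.sum_congr rfl (fun m _ => t2 m), t3]
        rw [Fin.sum_univ_eq_sum_range (fun x => p ^ (K - 1 - (((b : ℕ) + x) % K))) (N * K),
          Fin.sum_univ_eq_sum_range (fun x => p ^ (K - (((b : ℕ) + x) % K))) (N * K),
          sum_cycles K N (b : ℕ) hK0 (fun r => p ^ (K - 1 - r)),
          sum_cycles K N (b : ℕ) hK0 (fun r => p ^ (K - r))]
        have r1 : ∑ r ∈ Finset.range K, p ^ (K - 1 - r) = G := by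
          rw [hGdef, ← Finset.sum_range_reflect (fun i => p ^ i) K]
        have r2 : ∑ r ∈ Finset.range K, p ^ (K - r) = p * G := by
          have h3 : ∀ r ∈ Finset.range K, p ^ (K - r) = (fun i => p ^ (i + 1)) (K - 1 - r) := by
            intro r hr
            rw [Finset.mem_range] at hr
            simp only
            congr 1
            omega
          rw [Finset.sum_congr rfl h3, Finset.sum_range_reflect (fun i => p ^ (i + 1)) K]
          rw [hGdef, Finset.mul_sum]
          apply Finset.sum_congr rfl
          intro r _
          rw [pow_succ]
          ring
        rw [r1, r2]
      rw [score_b, score_c]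
      have hple : p ^ (K - (b : ℕ)) ≤ p ^ K := pow_le_pow_right₀ hp.le (Nat.sub_le K _)
      nlinarith [hmain]
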